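/- (Dinkelbach iterate monotonicity) Let N, D : α → ℝ with D x > 0 on a feasible set A. Define the iteration: given x_i ∈ A, set t_i = N x_i / D x_i and pick x_{i+1} ∈ A maximizing x ↦ N x − t_i · D x over A. Then the ratio sequence t_i = N x_i / D x_i is nondecreasing: t_{i+1} ≥ t_i. -/

import Mathlib

theorem stmt14 {α : Type*} (A : Set α) (N D : α → ℝ) (hD : ∀ x ∈ A, 0 < D x)
    (x : ℕ → α) (hx : ∀ i, x i ∈ A)
    (hstep : ∀ i, ∀ y ∈ A,
      N y - (N (x i) / D (x i)) * D y ≤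
        N (x (i + 1)) - (N (x i) / D (x i)) * D (x (i + 1))) :
    ∀ i, N (x i) / D (x i) ≤ N (x (i + 1)) / D (x (i + 1)) := by
  intro i
  have hDi := hD _ (hx i)
  have hDi1 := hD _ (hx (i + 1))
  have h := hstep i (x i) (hx i)
  have h0 : N (x i) - (N (x i) / D (x i)) * D (x i) = 0 := by
    field_simp
    ring
  rw [h0] at h
  rw [div_le_div_iff₀ hDi hDi1]
  nlinarith
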